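/- Let r and δ be integers with 0 ≤ δ < r. Let I_r denote the number of monic irreducible polynomials of degree r over GF(2) other than X, and let N_{r,δ} denote the number of monic polynomials P of degree r + δ over GF(2) with P(0) ≠ 0 that have an irreducible factor of degree r (i.e., the almost irreducible polynomials with exponent r and increment δ). Then N_{r,δ} = 2^{max(0, δ−1)} · I_r. -/

import Mathlib

open Polynomial


private lemma zmod2_eq_one : ∀ a : ZMod 2, a ≠ 0 → a = 1 := by decide

private lemma gf2_monic {P : Polynomial (ZMod 2)} (h : P ≠ 0) : P.Monic :=
  zmod2_eq_one _ (leadingCoeff_ne_zero.mpr h)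

private lemma irred_eval_ne {D : Polynomial (ZMod 2)} (hD : Irreducible D) (hne : D ≠ X) :
    D.eval 0 ≠ 0 := by
  intro h
  have hdvd : X ∣ D := X_dvd_iff.mpr (by rwa [coeff_zero_eq_eval_zero])
  have hassoc := (irreducible_X (R := ZMod 2)).associated_of_dvd hD hdvd
  exact hne (eq_of_monic_of_associated monic_X (gf2_monic hD.ne_zero) hassoc).symm

private lemma countQ (m : ℕ) :
    {Q : Polynomial (ZMod 2) | Q.Monic ∧ Q.natDegree = m + 1 ∧ Q.eval 0 ≠ 0}.ncard
      = 2 ^ m := by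
  set F : (Fin m → ZMod 2) → Polynomial (ZMod 2) := fun f =>
    X ^ (m + 1) + ((∑ i : Fin m, C (f i) * X ^ (i.1 + 1)) + C 1) with hF
  have coeffS : ∀ (f : Fin m → ZMod 2) (k : ℕ),
      (∑ i : Fin m, C (f i) * X ^ (i.1 + 1)).coeff k
        = if h : 1 ≤ k ∧ k ≤ m then f ⟨k - 1, by omega⟩ else 0 := by
    intro f k
    rw [finset_sum_coeff]
    simp only [coeff_C_mul_X_pow]
    split
    · next h =>
      rw [Finset.sum_eq_single (⟨k - 1, by omega⟩ : Fin m)]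
      · simp only [Fin.val_mk]
        rw [if_pos (by omega)]
      · intro j _ hj
        rw [if_neg]
        intro hk
        exact hj (by ext; simp only [Fin.val_mk]; omega)
      · simp
    · next h =>
      apply Finset.sum_eq_zero
      intro j _
      rw [if_neg]
      intro hk
      have := j.2
      omega
  have coeffF : ∀ (f : Fin m → ZMod 2) (k : ℕ),
      (F f).coeff k = (if k = m + 1 then 1 else 0)
        + ((if h : 1 ≤ k ∧ k ≤ m then f ⟨k - 1, by omega⟩ else 0)
          + (if k = 0 then 1 else 0)) := by
    intro f k
    simp only [hF, coeff_add, coeff_X_pow, coeffS, coeff_C]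
  have hdegR : ∀ f : Fin m → ZMod 2,
      ((∑ i : Fin m, C (f i) * X ^ (i.1 + 1)) + C 1).degree < ((m + 1 : ℕ) : WithBot ℕ) := by
    intro f
    rw [degree_lt_iff_coeff_zero]
    intro k hk
    have hk' : m + 1 ≤ k := by exact_mod_cast hk
    rw [coeff_add, coeffS, dif_neg (by omega), coeff_C, if_neg (by omega), add_zero]
  have hmono : ∀ f : Fin m → ZMod 2, (F f).Monic := fun f => monic_X_pow_add (hdegR f)
  have hdeg : ∀ f : Fin m → ZMod 2, (F f).natDegree = m + 1 := by
    intro f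
    have h1 : (F f).degree = ((m + 1 : ℕ) : WithBot ℕ) := by
      rw [hF]
      rw [degree_add_eq_left_of_degree_lt (by rw [degree_X_pow]; exact hdegR f),
        degree_X_pow]
    exact natDegree_eq_of_degree_eq_some h1
  have heval : ∀ f : Fin m → ZMod 2, (F f).eval 0 ≠ 0 := by
    intro f
    rw [← coeff_zero_eq_eval_zero, coeffF]
    norm_num
  have hset : {Q : Polynomial (ZMod 2) | Q.Monic ∧ Q.natDegree = m + 1 ∧ Q.eval 0 ≠ 0}
      = F '' Set.univ := by
    ext Q
    constructor
    · rintro ⟨hQm, hQd, hQe⟩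
      refine ⟨fun i => Q.coeff (i.1 + 1), Set.mem_univ _, ?_⟩
      ext k
      rw [coeffF]
      rcases Nat.lt_or_ge k (m + 2) with hk | hk
      · by_cases hk0 : k = 0
        · subst hk0
          rw [if_neg (by omega), dif_neg (by omega), if_pos rfl,
            coeff_zero_eq_eval_zero, zmod2_eq_one _ hQe]
          ring
        · by_cases hkm : k ≤ m
          · rw [if_neg (by omega), dif_pos ⟨by omega, hkm⟩, if_neg hk0]
            simp only [Fin.val_mk]
            rw [show k - 1 + 1 = k by omega]
            ring
          · have hk1 : k = m + 1 := by omega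
            subst hk1
            rw [if_pos rfl, dif_neg (by omega), if_neg (by omega)]
            rw [← hQd, hQm.coeff_natDegree]
            ring
      · rw [if_neg (by omega), dif_neg (by omega), if_neg (by omega),
          coeff_eq_zero_of_natDegree_lt (by omega : Q.natDegree < k)]
        ring
    · rintro ⟨f, -, rfl⟩
      exact ⟨hmono f, hdeg f, heval f⟩
  have hFinj : Function.Injective F := by
    intro f g h
    funext i
    have h2 := congrArg (fun p => Polynomial.coeff p (i.1 + 1)) h
    simp only [coeffF] at h2
    rw [dif_pos ⟨by omega, by omega⟩, dif_pos ⟨by omega, by omega⟩] at h2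
    have h3 : f ⟨i.1 + 1 - 1, by omega⟩ = g ⟨i.1 + 1 - 1, by omega⟩ := by
      simp [show i.1 + 1 ≠ m + 1 by omega, show i.1 + 1 ≠ 0 by omega] at h2
      exact h2
    convert h3 using 2 <;> exact Fin.ext (by simp)
  rw [hset, Set.ncard_image_of_injOn hFinj.injOn, Set.ncard_univ,
    Nat.card_eq_fintype_card]
  simp


/-- The density of almost irreducible polynomials: for `0 ≤ δ < r`, the number
of monic polynomials `P` of degree `r + δ` over GF(2) with `P(0) ≠ 0` having
an irreducible factor of degree `r` equals `2^(max 0 (δ-1))` times the number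
of monic irreducible polynomials of degree `r` other than `X`. -/
theorem almost_irreducible_count (r δ : ℕ) (hδr : δ < r) :
    {P : Polynomial (ZMod 2) | P.Monic ∧ P.natDegree = r + δ ∧ P.eval 0 ≠ 0 ∧
        ∃ D : Polynomial (ZMod 2), Irreducible D ∧ D.natDegree = r ∧ D ∣ P}.ncard =
      2 ^ (max 0 (δ - 1)) *
        {Q : Polynomial (ZMod 2) | Q.Monic ∧ Irreducible Q ∧ Q.natDegree = r ∧
          Q ≠ X}.ncard := by
  set SD := {Q : Polynomial (ZMod 2) | Q.Monic ∧ Irreducible Q ∧ Q.natDegree = r ∧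
    Q ≠ X} with hSD
  set SQ := {Q : Polynomial (ZMod 2) | Q.Monic ∧ Q.natDegree = δ ∧ Q.eval 0 ≠ 0} with hSQ
  have hset : {P : Polynomial (ZMod 2) | P.Monic ∧ P.natDegree = r + δ ∧ P.eval 0 ≠ 0 ∧
        ∃ D : Polynomial (ZMod 2), Irreducible D ∧ D.natDegree = r ∧ D ∣ P}
      = (fun p : Polynomial (ZMod 2) × Polynomial (ZMod 2) => p.1 * p.2) '' (SD ×ˢ SQ) := by
    ext P
    constructor
    · rintro ⟨hPm, hPd, hPe, D, hDirr, hDdeg, Q, rfl⟩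
      have hD0 : D ≠ 0 := hDirr.ne_zero
      have hDm : D.Monic := gf2_monic hD0
      have hQ0 : Q ≠ 0 := by
        rintro rfl
        have := hPm.ne_zero
        simp at this
      have hQm : Q.Monic := hDm.of_mul_monic_left hPm
      rw [natDegree_mul hD0 hQ0] at hPd
      have hQd : Q.natDegree = δ := by omega
      rw [eval_mul] at hPe
      have hQe := right_ne_zero_of_mul hPe
      have hDe := left_ne_zero_of_mul hPe
      have hDX : D ≠ X := by rintro rfl; simp at hDe
      exact ⟨(D, Q), ⟨⟨hDm, hDirr, hDdeg, hDX⟩, hQm, hQd, hQe⟩, rfl⟩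
    · rintro ⟨⟨D, Q⟩, ⟨⟨hDm, hDirr, hDdeg, hDX⟩, hQm, hQd, hQe⟩, rfl⟩
      refine ⟨hDm.mul hQm, ?_, ?_, D, hDirr, hDdeg, dvd_mul_right D Q⟩
      · rw [natDegree_mul hDm.ne_zero hQm.ne_zero, hDdeg, hQd]
      · rw [eval_mul]
        exact mul_ne_zero (irred_eval_ne hDirr hDX) hQe
  have hinj : Set.InjOn (fun p : Polynomial (ZMod 2) × Polynomial (ZMod 2) => p.1 * p.2)
      (SD ×ˢ SQ) := by
    rintro ⟨D1, Q1⟩ ⟨⟨hD1m, hD1irr, hD1d, -⟩, hQ1m, hQ1d, -⟩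
      ⟨D2, Q2⟩ ⟨⟨hD2m, hD2irr, hD2d, -⟩, hQ2m, hQ2d, -⟩ h
    simp only at h
    have hdvd : D1 ∣ D2 * Q2 := h ▸ dvd_mul_right D1 Q1
    rcases hD1irr.prime.2.2 _ _ hdvd with hdD | hdQ
    · have hDeq : D1 = D2 :=
        eq_of_monic_of_associated hD1m hD2m (hD1irr.associated_of_dvd hD2irr hdD)
      subst hDeq
      have hQeq : Q1 = Q2 := mul_left_cancel₀ hD1m.ne_zero h
      rw [hQeq]
    · have h1 : D1.natDegree = r := hD1d
      have h2 : Q2.natDegree = δ := hQ2d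
      have := natDegree_le_of_dvd hdQ hQ2m.ne_zero
      omega
  rw [hset, Set.ncard_image_of_injOn hinj, ← Nat.card_coe_set_eq,
    Nat.card_congr (Equiv.Set.prod SD SQ), Nat.card_prod,
    Nat.card_coe_set_eq, Nat.card_coe_set_eq, Nat.zero_max, mul_comm]
  congr 1
  cases δ with
  | zero =>
    have : SQ = {1} := by
      ext Q
      simp only [hSQ, Set.mem_setOf_eq, Set.mem_singleton_iff]
      constructor
      · rintro ⟨hQm, hQd, -⟩
        exact (Monic.natDegree_eq_zero hQm).mp hQd
      · rintro rfl
        refine ⟨monic_one, natDegree_one, by simp⟩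
    rw [this, Set.ncard_singleton]
    norm_num
  | succ m =>
    simpa using countQ m
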